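/- Let G be a finite group, n ≥ 1, and H : Fin (n+1) → Subgroup G a monotone family of subgroups with H 0 = ⊥ and H n = ⊤ which is geometric, meaning |H i| = |H 1|^i for every i, with H 1 ≠ ⊥. Then there exists a bijection φ : G → (Fin n → H 1) such that d_RT(φ(x), φ(y)) = d_C(x, y) for all x, y ∈ G; i.e. (G, d_C) is isometric to ((H 1)^n, d_RT). -/

import Mathlib

/-- The chain weight of `x` with respect to a chain of subgroups
`H : Fin (n+1) → Subgroup G`: the least index `i` with `x ∈ H i`. -/
noncomputable def chainWeight {G : Type*} [Group G] {n : ℕ}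
    (H : Fin (n + 1) → Subgroup G) (x : G) : ℕ :=
  sInf {i : ℕ | ∃ hi : i < n + 1, x ∈ H ⟨i, hi⟩}

/-- The chain distance associated to a chain of subgroups:
`d_C(x, y) = w_C(x * y⁻¹)`. -/
noncomputable def chainDist {G : Type*} [Group G] {n : ℕ}
    (H : Fin (n + 1) → Subgroup G) (x y : G) : ℕ :=
  chainWeight H (x * y⁻¹)

/-- The Rosenbloom–Tsfasman distance on `Fin n → A`: `0` if the tuples are
equal, and otherwise one plus the largest index where they differ. -/
noncomputable def rtDist {A : Type*} {n : ℕ} (a b : Fin n → A) : ℕ :=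
  sSup {i : ℕ | ∃ j : Fin n, a j ≠ b j ∧ i = (j : ℕ) + 1}

/-- A finite group `G` with a geometric chain of subgroups
(`|H i| = |H 1|^i` for all `i`, `H 1 ≠ ⊥`) is isometric to `(H 1)^n` with the
Rosenbloom–Tsfasman metric. -/
theorem stmt_17 {G : Type*} [Group G] [Fintype G] (n : ℕ) (hn : 1 ≤ n)
    (H : Fin (n + 1) → Subgroup G) (hmono : Monotone H)
    (hbot : H 0 = ⊥) (htop : H (Fin.last n) = ⊤)
    (hgeo : ∀ i : Fin (n + 1), Nat.card (H i) = Nat.card (H 1) ^ (i : ℕ))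
    (hne : H 1 ≠ ⊥) :
    ∃ φ : G ≃ (Fin n → (H 1)),
      ∀ x y : G, rtDist (φ x) (φ y) = chainDist H x y := by
  classical
  set q := Nat.card (H 1) with hq
  have hqpos : 0 < q := Nat.card_pos
  have hle : ∀ i : Fin n, H i.castSucc ≤ H i.succ :=
    fun i => hmono (le_of_lt (Fin.castSucc_lt_succ : i.castSucc < i.succ))
  -- cardinality of the "layer" quotients
  have hcard2 : ∀ i : Fin n,
      Nat.card (H i.succ ⧸ (H i.castSucc).subgroupOf (H i.succ)) = q := by
    intro i
    have h1 : Nat.card ((H i.castSucc).subgroupOf (H i.succ)) = q ^ (i : ℕ) := by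
      rw [Nat.card_congr (Subgroup.subgroupOfEquivOfLe (hle i)).toEquiv]
      simpa using hgeo i.castSucc
    have h2 : Nat.card (H i.succ) = q ^ ((i : ℕ) + 1) := by
      simpa using hgeo i.succ
    have hmi := Subgroup.card_mul_index ((H i.castSucc).subgroupOf (H i.succ))
    have hidx : ((H i.castSucc).subgroupOf (H i.succ)).index
        = Nat.card (H i.succ ⧸ (H i.castSucc).subgroupOf (H i.succ)) := rfl
    rw [h1, h2, hidx] at hmi
    have := pow_ne_zero (i : ℕ) hqpos.ne'
    rw [pow_succ] at hmi
    exact Nat.eq_of_mul_eq_mul_left (Nat.pos_of_ne_zero this)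
      (by rw [mul_comm] at hmi ⊢; omega)
  -- identification of each layer quotient with H 1
  have ι : ∀ i : Fin n, (H i.succ ⧸ (H i.castSucc).subgroupOf (H i.succ)) ≃ H 1 :=
    fun i => (Finite.card_eq.mp (hcard2 i)).some
  set e := fun i : Fin n => Subgroup.quotientEquivProdOfLE (hle i) with he
  set φ₀ : G → Fin n → H 1 :=
    fun x j => ι j (e j (QuotientGroup.mk x⁻¹ : G ⧸ H j.castSucc)).2 with hφ₀
  have mkrel : ∀ (i : Fin (n + 1)) (x y : G),
      ((QuotientGroup.mk x⁻¹ : G ⧸ H i) = QuotientGroup.mk y⁻¹) ↔ x * y⁻¹ ∈ H i := by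
    intro i x y
    rw [QuotientGroup.eq, inv_inv]
  have key : ∀ (j : Fin n) (x y : G),
      (x * y⁻¹ ∈ H j.succ ∧ φ₀ x j = φ₀ y j) ↔ x * y⁻¹ ∈ H j.castSucc := by
    intro j x y
    constructor
    · rintro ⟨h1, h2⟩
      have hsnd : (e j (QuotientGroup.mk x⁻¹)).2 = (e j (QuotientGroup.mk y⁻¹)).2 :=
        (ι j).injective h2
      have hfst : (e j (QuotientGroup.mk x⁻¹)).1 = (e j (QuotientGroup.mk y⁻¹)).1 := by
        show (QuotientGroup.mk x⁻¹ : G ⧸ H j.succ) = QuotientGroup.mk y⁻¹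
        exact (mkrel j.succ x y).mpr h1
      have : (QuotientGroup.mk x⁻¹ : G ⧸ H j.castSucc) = QuotientGroup.mk y⁻¹ :=
        (e j).injective (Prod.ext hfst hsnd)
      exact (mkrel j.castSucc x y).mp this
    · intro h
      refine ⟨hle j h, ?_⟩
      have : (QuotientGroup.mk x⁻¹ : G ⧸ H j.castSucc) = QuotientGroup.mk y⁻¹ :=
        (mkrel j.castSucc x y).mpr h
      simp only [hφ₀, this]
  -- the main downward induction
  have main : ∀ (d i : ℕ) (hdi : i + d = n) (x y : G),
      ((∀ j : Fin n, i ≤ (j : ℕ) → φ₀ x j = φ₀ y j) ↔ x * y⁻¹ ∈ H ⟨i, by omega⟩) := by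
    intro d
    induction d with
    | zero =>
      intro i hdi x y
      have hi : (⟨i, by omega⟩ : Fin (n + 1)) = Fin.last n := by
        ext; simp [Fin.last]; omega
      rw [hi, htop]
      refine iff_of_true ?_ trivial
      intro j hj
      exact absurd j.isLt (by omega)
    | succ d ih =>
      intro i hdi x y
      have hif : i < n := by omega
      have hsucc : (⟨i, hif⟩ : Fin n).succ = ⟨i + 1, by omega⟩ := rfl
      have hcast : (⟨i, hif⟩ : Fin n).castSucc = ⟨i, by omega⟩ := rfl
      constructor
      · intro hall
        have h1 : x * y⁻¹ ∈ H ⟨i + 1, by omega⟩ :=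
          (ih (i + 1) (by omega) x y).mp (fun j hj => hall j (by omega))
        have h2 : φ₀ x ⟨i, hif⟩ = φ₀ y ⟨i, hif⟩ := hall ⟨i, hif⟩ le_rfl
        have := (key ⟨i, hif⟩ x y).mp ⟨by rw [hsucc]; exact h1, h2⟩
        rwa [hcast] at this
      · intro hmem j hj
        have hmem1 : x * y⁻¹ ∈ H (⟨i, hif⟩ : Fin n).castSucc := by rw [hcast]; exact hmem
        rcases eq_or_lt_of_le hj with heq | hlt
        · have : j = ⟨i, hif⟩ := by ext; simp only [Fin.val_mk]; omega
          rw [this]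
          exact ((key ⟨i, hif⟩ x y).mpr hmem1).2
        · have h1 : x * y⁻¹ ∈ H ⟨i + 1, by omega⟩ := by
            have := ((key ⟨i, hif⟩ x y).mpr hmem1).1
            rwa [hsucc] at this
          exact (ih (i + 1) (by omega) x y).mpr h1 j (by omega)
  -- injectivity
  have hinj : Function.Injective φ₀ := by
    intro x y hxy
    have h := (main n 0 (by omega) x y).mp (fun j _ => congrFun hxy j)
    have h0 : (⟨0, by omega⟩ : Fin (n + 1)) = 0 := rfl
    rw [h0, hbot, Subgroup.mem_bot, mul_inv_eq_one] at h
    exact h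
  -- cardinalities
  have hcardG : Nat.card G = q ^ n := by
    have h := hgeo (Fin.last n)
    rw [htop] at h
    rw [← Nat.card_congr Subgroup.topEquiv.toEquiv, h]
    simp
  have hcard : Nat.card G = Nat.card (Fin n → H 1) := by
    rw [hcardG, Nat.card_fun]
    simp [hq, Nat.card_eq_fintype_card]
  have hbij : Function.Bijective φ₀ :=
    (Nat.bijective_iff_injective_and_card φ₀).mpr ⟨hinj, hcard⟩
  refine ⟨Equiv.ofBijective φ₀ hbij, ?_⟩
  intro x y
  simp only [Equiv.ofBijective_apply]
  -- distance computation
  have hSne : n ∈ {i : ℕ | ∃ hi : i < n + 1, x * y⁻¹ ∈ H ⟨i, hi⟩} := by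
    refine ⟨by omega, ?_⟩
    have : (⟨n, by omega⟩ : Fin (n + 1)) = Fin.last n := rfl
    rw [this, htop]; trivial
  set S := {i : ℕ | ∃ hi : i < n + 1, x * y⁻¹ ∈ H ⟨i, hi⟩} with hS
  have hmmem := Nat.sInf_mem (s := S) ⟨n, hSne⟩
  obtain ⟨hmlt, hmem⟩ := hmmem
  set m := sInf S with hm
  have hagree : ∀ j : Fin n, m ≤ (j : ℕ) → φ₀ x j = φ₀ y j :=
    (main (n - m) m (by omega) x y).mpr hmem
  show rtDist (φ₀ x) (φ₀ y) = chainDist H x y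
  have hcd : chainDist H x y = m := rfl
  rw [hcd]
  have hrt : rtDist (φ₀ x) (φ₀ y)
      = sSup {i : ℕ | ∃ j : Fin n, φ₀ x j ≠ φ₀ y j ∧ i = (j : ℕ) + 1} := rfl
  rw [hrt]
  by_cases hxy : x = y
  · subst hxy
    have hT : {i : ℕ | ∃ j : Fin n, φ₀ x j ≠ φ₀ x j ∧ i = (j : ℕ) + 1} = ∅ := by
      ext i; simp
    have h0S : 0 ∈ S := by
      refine ⟨by omega, ?_⟩
      rw [show (⟨0, by omega⟩ : Fin (n + 1)) = 0 from rfl, hbot]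
      simp
    have hm0 : m = 0 := Nat.le_zero.mp (Nat.sInf_le h0S)
    rw [hT, csSup_empty, hm0]
    rfl
  · have hm1 : 1 ≤ m := by
      rcases Nat.eq_zero_or_pos m with h0 | h1
      · exfalso
        apply hxy
        have hfin : (⟨m, hmlt⟩ : Fin (n + 1)) = 0 := by ext; simpa using h0
        rw [hfin, hbot, Subgroup.mem_bot, mul_inv_eq_one] at hmem
        exact hmem
      · exact h1
    have hj0 : m - 1 < n := by omega
    have hgreat : IsGreatest {i : ℕ | ∃ j : Fin n, φ₀ x j ≠ φ₀ y j ∧ i = (j : ℕ) + 1} m := by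
      constructor
      · refine ⟨⟨m - 1, hj0⟩, ?_, by simp; omega⟩
        intro heq
        have hall : ∀ j : Fin n, m - 1 ≤ (j : ℕ) → φ₀ x j = φ₀ y j := by
          intro j hj
          rcases eq_or_lt_of_le hj with h | h
          · have : j = ⟨m - 1, hj0⟩ := by ext; simp only [Fin.val_mk]; omega
            rw [this]; exact heq
          · exact hagree j (by omega)
        have := (main (n - (m - 1)) (m - 1) (by omega) x y).mp hall
        have hin : m - 1 ∈ S := ⟨by omega, this⟩
        have := Nat.sInf_le hin
        omega
      · rintro i ⟨j, hdiff, rfl⟩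
        by_contra hcon
        exact hdiff (hagree j (by omega))
    exact hgreat.csSup_eq
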